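/- arXiv:1812.10499 — 5 statements merged into one kernel-verified Lean document; each statement's English description precedes it below -/
import Mathlib

section
/- For every vertex x with x ≠ v0, the shortest-path cost satisfies the Bellman optimality equation: cost x equals the infimum, over all vertices v with E v x, of cost v + w v x (the infimum being ∞ if x has no in-edges). In particular, the cost of reaching x ≠ v0 is determined by the costs of its in-neighbors. -/
open scoped ENNReal

variable {V : Type*}

/-- `IsPath E v0 x p` means `p` is a finite sequence of vertices starting at `v0`,
ending at `x`, with consecutive vertices joined by edges of `E`. -/
def IsPath (E : V → V → Prop) (v0 x : V) (p : List V) : Prop :=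
  p.Chain' E ∧ p.head? = some v0 ∧ p.getLast? = some x

/-- The cost of a path: the sum of the weights of its consecutive edges. -/
noncomputable def pathCost (w : V → V → ℝ≥0∞) (p : List V) : ℝ≥0∞ :=
  ((p.zip p.tail).map fun q => w q.1 q.2).sum

/-- `cost E w v0 x` : the infimum of the costs of all paths from `v0` to `x`
(`∞` if `x` is unreachable from `v0`). -/
noncomputable def cost (E : V → V → Prop) (w : V → V → ℝ≥0∞) (v0 x : V) : ℝ≥0∞ :=
  ⨅ p : {p : List V // IsPath E v0 x p}, pathCost w p.1

lemma pathCost_cons_cons (w : V → V → ℝ≥0∞) (a b : V) (l : List V) :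
    pathCost w (a :: b :: l) = w a b + pathCost w (b :: l) := by
  simp [pathCost]

lemma pathCost_append (w : V → V → ℝ≥0∞) :
    ∀ (l : List V) (v b : V), l.getLast? = some v →
      pathCost w (l ++ [b]) = pathCost w l + w v b
  | [], v, b, h => by simp at h
  | [a], v, b, h => by
    simp only [List.getLast?_singleton, Option.some_inj] at h
    subst h
    simp [pathCost]
  | a :: c :: l, v, b, h => by
    have h' : (c :: l).getLast? = some v := by
      rw [← h]; rfl
    have := pathCost_append w (c :: l) v b h'
    simp only [List.cons_append, pathCost_cons_cons]
    rw [← List.cons_append, this, add_assoc]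

/-- Bellman optimality equation: for `x ≠ v0`, the shortest-path cost of `x`
equals the infimum over in-neighbors `v` of `cost v + w v x`. -/
theorem bellman_optimality [Fintype V] (E : V → V → Prop) (w : V → V → ℝ≥0∞)
    (hpos : ∀ u v, E u v → 0 < w u v) (hfin : ∀ u v, E u v → w u v < ⊤)
    (v0 x : V) (hx : x ≠ v0) :
    cost E w v0 x = ⨅ v : {v : V // E v x}, (cost E w v0 v.1 + w v.1 x) := by
  apply le_antisymm
  · refine le_iInf fun v => ?_
    rw [show cost E w v0 v.1 = ⨅ p : {p : List V // IsPath E v0 v.1 p}, pathCost w p.1 from rfl,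
      ENNReal.iInf_add]
    refine le_iInf fun ⟨q, hchain, hhead, hlast⟩ => ?_
    have hq' : IsPath E v0 x (q ++ [x]) := by
      refine ⟨?_, ?_, List.getLast?_concat⟩
      · rw [(show List.Chain' E (q ++ [x]) ↔ _ from List.isChain_append)]
        refine ⟨hchain, List.isChain_singleton _, fun y hy z hz => ?_⟩
        simp only [List.head?_cons, Option.mem_some_iff] at hz
        rw [hlast, Option.mem_some_iff] at hy
        subst hy; subst hz; exact v.2
      · have hqne : q ≠ [] := by rintro rfl; simp at hhead
        rwa [List.head?_append_of_ne_nil _ hqne]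
    calc cost E w v0 x ≤ pathCost w (q ++ [x]) := iInf_le (fun p : {p : List V // IsPath E v0 x p} => pathCost w p.1) ⟨_, hq'⟩
      _ = pathCost w q + w v.1 x := pathCost_append w q v.1 x hlast
  · refine le_iInf fun pp => ?_
    obtain ⟨p, hchain, hhead, hlast⟩ := pp
    have hpne : p ≠ [] := by rintro rfl; simp at hlast
    have hgl : p.getLast hpne = x := by
      rw [List.getLast?_eq_getLast hpne, Option.some_inj] at hlast; exact hlast
    have hpq : p = p.dropLast ++ [x] := by
      conv_lhs => rw [← List.dropLast_append_getLast hpne, hgl]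
    have hqne : p.dropLast ≠ [] := by
      intro h
      rw [h] at hpq
      rw [hpq] at hhead
      simp at hhead
      exact hx hhead
    set q := p.dropLast with hqdef
    have hqlast : q.getLast? = some (q.getLast hqne) := List.getLast?_eq_getLast hqne
    have hE : E (q.getLast hqne) x := by
      rw [hpq, (show List.Chain' E (q ++ [x]) ↔ _ from List.isChain_append)] at hchain
      exact hchain.2.2 _ hqlast x rfl
    have hqpath : IsPath E v0 (q.getLast hqne) q := by
      refine ⟨?_, ?_, hqlast⟩
      · rw [hpq, (show List.Chain' E (q ++ [x]) ↔ _ from List.isChain_append)] at hchain; exact hchain.1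
      · rwa [hpq, List.head?_append_of_ne_nil _ hqne] at hhead
    calc (⨅ v : {v : V // E v x}, cost E w v0 v.1 + w v.1 x)
        ≤ cost E w v0 (q.getLast hqne) + w (q.getLast hqne) x :=
          iInf_le (fun v : {v : V // E v x} => cost E w v0 v.1 + w v.1 x) ⟨_, hE⟩
      _ ≤ pathCost w q + w (q.getLast hqne) x := by
          have hc : cost E w v0 (q.getLast hqne) ≤ pathCost w q :=
            iInf_le (fun p : {p : List V // IsPath E v0 (q.getLast hqne) p} => pathCost w p.1)
              ⟨q, hqpath⟩
          gcongr
      _ = pathCost w p := by rw [hpq]; exact (pathCost_append w q _ x hqlast).symm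
end

section
/- (Lower-bound propagation, Lemma 6 of the paper.) Let C : V → ℝ≥0∞ satisfy C v ≤ cost v for every vertex v (i.e., C v is a lower bound on the cost of every path from v0 to v). Then for every vertex x with x ≠ v0, the infimum, over all v with E v x, of C v + w v x is still a lower bound on cost x; that is, ⨅ {C v + w v x : E v x} ≤ cost x. -/
open scoped ENNReal

variable {V : Type*}

lemma pathCost_cons (w : V → V → ℝ≥0∞) (a b : V) (t : List V) :
    pathCost w (a :: b :: t) = w a b + pathCost w (b :: t) := by
  simp [pathCost]

lemma pathCost_concat (w : V → V → ℝ≥0∞) :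
    ∀ (l : List V) (a b : V), pathCost w (l ++ [a, b]) = pathCost w (l ++ [a]) + w a b := by
  intro l
  induction l with
  | nil => intro a b; simp [pathCost]
  | cons c l ih =>
    intro a b
    cases l with
    | nil => simp [pathCost, add_comm]
    | cons d l' =>
      simp only [List.cons_append, pathCost_cons] at ih ⊢
      rw [ih, add_assoc]

/-- Lower-bound propagation (Lemma 6): if `C` is a pointwise lower bound on `cost`,
then for `x ≠ v0`, `⨅ {C v + w v x : E v x}` is still a lower bound on `cost x`. -/
theorem lowerBound_propagation [Fintype V] (E : V → V → Prop) (w : V → V → ℝ≥0∞)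
    (hpos : ∀ u v, E u v → 0 < w u v) (hfin : ∀ u v, E u v → w u v < ⊤)
    (v0 : V) (C : V → ℝ≥0∞) (hC : ∀ v, C v ≤ cost E w v0 v)
    (x : V) (hx : x ≠ v0) :
    (⨅ v : {v : V // E v x}, (C v.1 + w v.1 x)) ≤ cost E w v0 x := by
  suffices h : ∀ p : List V, IsPath E v0 x p →
      (⨅ v : {v : V // E v x}, (C v.1 + w v.1 x)) ≤ pathCost w p from
    le_iInf fun P => h P.1 P.2
  rintro p ⟨hchain, hhead, hlast⟩
  obtain ⟨q, rfl⟩ := List.getLast?_eq_some_iff.mp hlast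
  have hq : q ≠ [] := by
    rintro rfl
    simp at hhead
    exact hx hhead
  obtain ⟨r, v, rfl⟩ := (List.eq_nil_or_concat q).resolve_left hq
  simp only [List.concat_eq_append] at hchain hhead hq ⊢
  replace hchain := List.isChain_append.mp hchain
  obtain ⟨hchain1, -, hedge⟩ := hchain
  have hE : E v x := by
    apply hedge v _ x rfl
    simp
  have hhead' : (r ++ [v]).head? = some v0 := by
    rcases r with _ | ⟨c, r'⟩ <;> simpa using hhead
  have hpath : IsPath E v0 v (r ++ [v]) := ⟨hchain1, hhead', by simp⟩
  calc (⨅ v : {v : V // E v x}, (C v.1 + w v.1 x)) ≤ C v + w v x := iInf_le _ (⟨v, hE⟩ : {v : V // E v x})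
    _ ≤ pathCost w (r ++ [v]) + w v x := by
        gcongr
        exact (hC v).trans (iInf_le _ (⟨r ++ [v], hpath⟩ : {p : List V // IsPath E v0 v p}))
    _ = pathCost w ((r ++ [v]) ++ [x]) := by
        rw [List.append_assoc]
        exact (pathCost_concat w r v x).symm
end

section
/- (Dijkstra frontier invariant, used in the proof of Lemma 5.) For every vertex v with v ∉ F, the cost of v is at least the minimum tentative distance of the unfixed vertices: ⨅ {D y : y ∉ F} ≤ cost v. -/
open scoped ENNReal

variable {V : Type*}

/-- An `F`-path from `v0` to `x` : a path all of whose vertices other than the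
final vertex `x` lie in `F`. `Dfun E w v0 F x` is the infimum of the costs of
`F`-paths from `v0` to `x` (`∞` if no `F`-path to `x` exists). -/
noncomputable def Dfun (E : V → V → Prop) (w : V → V → ℝ≥0∞) (v0 : V) (F : Set V)
    (x : V) : ℝ≥0∞ :=
  ⨅ p : {p : List V // IsPath E v0 x p ∧ ∀ v ∈ p.dropLast, v ∈ F}, pathCost w p.1

/-- The edge list of `p.take (n+1)` is the `n`-prefix of the edge list of `p`. -/
lemma zip_tail_take (p : List V) (n : ℕ) :
    (p.take (n+1)).zip ((p.take (n+1)).tail) = (p.zip p.tail).take n := by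
  induction p generalizing n with
  | nil => simp
  | cons a t ih =>
    cases t with
    | nil => simp
    | cons b s =>
      cases n with
      | zero => simp
      | succ m =>
        simpa using congrArg (List.cons (a, b)) (ih m)

/-- A prefix of a path costs no more than the whole path. -/
lemma pathCost_take_le (w : V → V → ℝ≥0∞) (p : List V) (n : ℕ) :
    pathCost w (p.take (n+1)) ≤ pathCost w p := by
  unfold pathCost
  rw [zip_tail_take]
  conv_rhs => rw [← List.take_append_drop n (p.zip p.tail)]
  rw [List.map_append, List.sum_append]
  exact le_self_add

/-- Dijkstra frontier invariant: for every unfixed vertex `v`, the minimum tentative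
distance among unfixed vertices is a lower bound on `cost v`. -/
theorem frontier_invariant [Fintype V] (E : V → V → Prop) (w : V → V → ℝ≥0∞)
    (hpos : ∀ u v, E u v → 0 < w u v) (hfin : ∀ u v, E u v → w u v < ⊤)
    (v0 : V) (F : Set V) (hv0 : v0 ∈ F) (v : V) (hv : v ∉ F) :
    (⨅ y : {y : V // y ∉ F}, Dfun E w v0 F y.1) ≤ cost E w v0 v := by
  classical
  rw [cost]
  refine le_iInf fun ⟨p, hchain, hhead, hlast⟩ => ?_
  -- p is nonempty and its last element is v, which is not in F
  have hpne : p ≠ [] := by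
    intro h; rw [h] at hhead; simp at hhead
  have hvmem : v ∈ p := by
    have := List.getLast?_eq_getLast hpne
    rw [this] at hlast
    have : p.getLast hpne = v := by injection hlast
    exact this ▸ List.getLast_mem hpne
  -- find the first vertex of p not in F
  set i := p.findIdx (fun x => !decide (x ∈ F)) with hi
  have hilt : i < p.length :=
    List.findIdx_lt_length_of_exists ⟨v, hvmem, by simp [hv]⟩
  set y := p.get ⟨i, hilt⟩ with hy
  have hyF : y ∉ F := by
    have := List.findIdx_getElem (w := hilt)
    simpa [hy] using this
  have hbefore : ∀ j (hj : j < p.length), j < i → p[j] ∈ F := by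
    intro j hj hji
    have := List.not_of_lt_findIdx (p := fun x => !decide (x ∈ F)) hji
    simpa using this
  -- the prefix q := p.take (i+1) is an F-path from v0 to y
  set q := p.take (i+1) with hq
  have hqlen : q.length = i + 1 := by
    simp [hq, Nat.succ_le_of_lt hilt]
  have hqne : q ≠ [] := by
    intro h; rw [h] at hqlen; simp at hqlen
  have hqchain : q.Chain' E := hchain.take _
  have hqhead : q.head? = some v0 := by
    rw [hq, List.head?_take]; simp [hhead]
  have hqlast : q.getLast? = some y := by
    rw [List.getLast?_eq_getLast hqne, List.getLast_eq_getElem]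
    congr 1
    simp only [hqlen, Nat.add_sub_cancel]
    simp [hq, hy]
  have hqdrop : ∀ u ∈ q.dropLast, u ∈ F := by
    intro u hu
    have hdt : q.dropLast = p.take i := by
      rw [List.dropLast_eq_take, hqlen]
      simp [hq, List.take_take]
    rw [hdt] at hu
    obtain ⟨j, hjlen, hju⟩ := List.mem_iff_getElem.1 hu
    have hji : j < i := by
      have := hjlen; simp at this; omega
    have hjp : j < p.length := lt_trans hji hilt
    have hg : (p.take i)[j] = p[j] := by
      simp
    rw [← hju, hg]
    exact hbefore j hjp hji
  have hD : Dfun E w v0 F y ≤ pathCost w p :=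
    le_trans (iInf_le _ ⟨q, ⟨hqchain, hqhead, hqlast⟩, hqdrop⟩) (pathCost_take_le w p i)
  exact le_trans (iInf_le _ ⟨y, hyF⟩) hD
end

section
/- (Out-version threshold criterion, Lemma 8 of the paper, due to Crauser et al.) Define threshold := ⨅ {D u + w u v : E u v ∧ u ∉ F}, the infimum over all edges whose tail is unfixed. Let x ∉ F be a vertex with D x ≤ threshold. Then D x = cost x. -/
open scoped ENNReal

variable {V : Type*}

/-- Out-version threshold criterion (Lemma 8, Crauser et al.): if `x ∉ F` and
`D x ≤ ⨅ {D u + w u v : E u v ∧ u ∉ F}`, then `D x = cost x`. -/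
theorem out_version_threshold [Fintype V] (E : V → V → Prop) (w : V → V → ℝ≥0∞)
    (hpos : ∀ u v, E u v → 0 < w u v) (hfin : ∀ u v, E u v → w u v < ⊤)
    (v0 : V) (F : Set V) (hv0 : v0 ∈ F) (x : V) (hx : x ∉ F)
    (hD : Dfun E w v0 F x ≤
      ⨅ e : {e : V × V // E e.1 e.2 ∧ e.1 ∉ F},
        (Dfun E w v0 F e.1.1 + w e.1.1 e.1.2)) :
    Dfun E w v0 F x = cost E w v0 x := by
  classical
  refine le_antisymm ?_ (le_iInf fun q => iInf_le_of_le ⟨q.1, q.2.1⟩ le_rfl)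
  refine le_iInf fun ⟨p, hp⟩ => ?_
  by_cases hF : ∀ v ∈ p.dropLast, v ∈ F
  · exact iInf_le_of_le ⟨p, hp, hF⟩ le_rfl
  -- there is an index `j < p.length - 1` with `p[j] ∉ F`
  push_neg at hF
  obtain ⟨v, hv, hvF⟩ := hF
  rw [List.dropLast_eq_take] at hv
  obtain ⟨j, hj, hjv⟩ := List.mem_iff_getElem.1 hv
  rw [List.length_take] at hj
  have hj' : j < p.length - 1 := lt_of_lt_of_le hj (min_le_left _ _)
  rw [List.getElem_take] at hjv
  -- the least such index
  have hex : ∃ i, ∃ _ : i < p.length - 1, p[i]'(by omega) ∉ F := ⟨j, hj', hjv ▸ hvF⟩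
  obtain ⟨i, hilt, hiF, hmin⟩ :
      ∃ i, ∃ _ : i < p.length - 1, p[i]'(by omega) ∉ F ∧
        ∀ k < i, ∀ hk : k < p.length, p[k] ∈ F := by
    obtain ⟨hilt, hiF⟩ := Nat.find_spec hex
    refine ⟨Nat.find hex, hilt, hiF, fun k hk hk' => ?_⟩
    by_contra hkF
    exact Nat.find_min hex hk ⟨by omega, hkF⟩
  have hilen : i + 1 < p.length := by omega
  have hedge : E (p[i]'(by omega)) (p[i + 1]'hilen) := by
    have := List.isChain_iff_getElem.1 hp.1 i hilen
    simpa using this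
  -- the prefix path `p.take (i+1)` is an `F`-path to `p[i]`
  set q : List V := p.take (i + 1) with hq
  have hqlen : q.length = i + 1 := by
    simp [hq, List.length_take]; omega
  have hqpath : IsPath E v0 (p[i]'(by omega)) q := by
    refine ⟨hp.1.take _, ?_, ?_⟩
    · rw [hq, List.head?_take, if_neg (by omega)]; exact hp.2.1
    · rw [List.getLast?_eq_getElem?]
      simp only [hq, List.length_take]
      rw [Nat.min_eq_left (by omega : i + 1 ≤ p.length), Nat.add_sub_cancel,
        List.getElem?_take, if_pos (Nat.lt_succ_self i),
        List.getElem?_eq_getElem (show i < p.length by omega)]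
  have hqF : ∀ v ∈ q.dropLast, v ∈ F := by
    intro v hv
    rw [List.dropLast_eq_take, hqlen, Nat.add_sub_cancel, hq, List.take_take,
      min_eq_left (Nat.le_succ i)] at hv
    obtain ⟨k, hk, hkv⟩ := List.mem_iff_getElem.1 hv
    rw [List.length_take] at hk
    have hk' : k < i := lt_of_lt_of_le hk (min_le_left _ _)
    rw [List.getElem_take] at hkv
    exact hkv ▸ hmin k hk' (by omega)
  -- cost comparison : pathCost q + w p[i] p[i+1] ≤ pathCost p
  have hzip : q.zip q.tail = (p.zip p.tail).take i := by
    apply List.ext_getElem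
    · simp [hq, List.length_zip, List.length_take, List.length_tail]; omega
    · intro k h1 h2
      have hk : k < i := by
        simp [List.length_zip, List.length_tail, hqlen] at h1; omega
      simp only [List.getElem_zip, List.getElem_tail, List.getElem_take, hq]
  have hcost : pathCost w q + w (p[i]'(by omega)) (p[i + 1]'hilen) ≤ pathCost w p := by
    have hzlen : i < (p.zip p.tail).length := by
      simp [List.length_zip, List.length_tail]; omega
    have hsum : pathCost w q + w (p[i]'(by omega)) (p[i + 1]'hilen)
        = (((p.zip p.tail).take (i + 1)).map fun e => w e.1 e.2).sum := by
      rw [List.take_succ, List.getElem?_eq_getElem hzlen, List.map_append,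
        List.sum_append, pathCost, hzip]
      simp [List.getElem_zip, List.getElem_tail]
    rw [hsum, pathCost]
    calc (((p.zip p.tail).take (i + 1)).map fun e => w e.1 e.2).sum
        ≤ (((p.zip p.tail).take (i + 1)).map fun e => w e.1 e.2).sum
          + (((p.zip p.tail).drop (i + 1)).map fun e => w e.1 e.2).sum := le_self_add
      _ = _ := by rw [← List.sum_append, ← List.map_append, List.take_append_drop]
  calc Dfun E w v0 F x
      ≤ Dfun E w v0 F (p[i]'(by omega)) + w (p[i]'(by omega)) (p[i + 1]'hilen) :=
        hD.trans (iInf_le _ (⟨(p[i]'(by omega), p[i + 1]'hilen), hedge, hiF⟩ :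
          {e : V × V // E e.1 e.2 ∧ e.1 ∉ F}))
    _ ≤ pathCost w q + w (p[i]'(by omega)) (p[i + 1]'hilen) :=
        add_le_add_left (iInf_le _ (⟨q, hqpath, hqF⟩ :
          {r : List V // IsPath E v0 (p[i]'(by omega)) r ∧ ∀ v ∈ r.dropLast, v ∈ F})) _
    _ ≤ pathCost w p := hcost
end

section
/- (Strict decrease along optimal predecessors, used in the termination argument for SP₁.) Let x ≠ v0 be reachable from v0. Then there exists a vertex v with E v x such that cost v + w v x = cost x and cost v < cost x; that is, since all edge weights are strictly positive, some in-neighbor of x realizing the optimal cost has cost strictly smaller than that of x. -/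
open scoped ENNReal

variable {V : Type*}

lemma pathCost_append_single (w : V → V → ℝ≥0∞) :
    ∀ (q : List V) (hq : q ≠ []) (x : V),
      pathCost w (q ++ [x]) = pathCost w q + w (q.getLast hq) x
  | [], hq, _ => absurd rfl hq
  | [a], _, x => by simp [pathCost]
  | a :: b :: l, _, x => by
      simp only [List.cons_append]
      rw [pathCost_cons_cons, show b :: (l ++ [x]) = (b :: l) ++ [x] from rfl,
        pathCost_append_single w (b :: l) (by simp) x,
        pathCost_cons_cons, add_assoc]
      congr 2

lemma pathCost_lt_top {E : V → V → Prop} (w : V → V → ℝ≥0∞)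
    (hfin : ∀ u v, E u v → w u v < ⊤) :
    ∀ {p : List V}, p.Chain' E → pathCost w p < ⊤
  | [], _ => by simp [pathCost]
  | [a], _ => by simp [pathCost]
  | a :: b :: l, h => by
      rw [show List.Chain' E (a :: b :: l) = List.IsChain E (a :: b :: l) from rfl,
        List.isChain_cons_cons] at h
      rw [pathCost_cons_cons]
      exact ENNReal.add_lt_top.2 ⟨hfin a b h.1, pathCost_lt_top w hfin h.2⟩

/-- Strict decrease along optimal predecessors: if `x ≠ v0` is reachable from `v0`,
then some in-neighbor `v` of `x` realizes the optimal cost of `x` and satisfies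
`cost v < cost x`. -/
theorem strict_decrease_pred [Fintype V] (E : V → V → Prop) (w : V → V → ℝ≥0∞)
    (hpos : ∀ u v, E u v → 0 < w u v) (hfin : ∀ u v, E u v → w u v < ⊤)
    (v0 x : V) (hx : x ≠ v0) (hreach : ∃ p : List V, IsPath E v0 x p) :
    ∃ v : V, E v x ∧ cost E w v0 v + w v x = cost E w v0 x ∧
      cost E w v0 v < cost E w v0 x := by
  classical
  -- decomposition of any path to x
  have decomp : ∀ p : List V, IsPath E v0 x p →
      ∃ (q : List V) (hq : q ≠ []), p = q ++ [x] ∧ IsPath E v0 (q.getLast hq) q ∧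
        E (q.getLast hq) x := by
    intro p hp
    obtain ⟨hc, hh, hl⟩ := hp
    have hpne : p ≠ [] := by rintro rfl; simp at hh
    have hsplit : p = p.dropLast ++ [p.getLast hpne] := (List.dropLast_append_getLast hpne).symm
    have hlast : p.getLast hpne = x := by
      rw [List.getLast?_eq_getLast hpne] at hl; exact Option.some_injective _ hl
    set q := p.dropLast with hqdef
    have hqne : q ≠ [] := by
      intro h
      have : p = [x] := by rw [hsplit, h, hlast]; rfl
      rw [this] at hh; simp at hh; exact hx hh
    refine ⟨q, hqne, by rw [hsplit, hlast], ?_, ?_⟩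
    · have hp' : p = q ++ [x] := by rw [hsplit, hlast]
      rw [hp', show List.Chain' E (q ++ [x]) = List.IsChain E (q ++ [x]) from rfl,
        List.isChain_append] at hc
      refine ⟨hc.1, ?_, ?_⟩
      · rw [hp', List.head?_append_of_ne_nil _ hqne] at hh; exact hh
      · exact List.getLast?_eq_getLast hqne
    · have hp' : p = q ++ [x] := by rw [hsplit, hlast]
      rw [hp', show List.Chain' E (q ++ [x]) = List.IsChain E (q ++ [x]) from rfl,
        List.isChain_append] at hc
      have := hc.2.2 (q.getLast hqne) (List.getLast?_eq_getLast hqne) x rfl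
      exact this
  -- extending a path to a predecessor
  have extend : ∀ (v : V), E v x → ∀ q : List V, IsPath E v0 v q → IsPath E v0 x (q ++ [x]) := by
    intro v hvx q ⟨hc, hh, hl⟩
    have hqne : q ≠ [] := by rintro rfl; simp at hh
    refine ⟨List.isChain_append.2 ⟨hc, List.isChain_singleton x, ?_⟩, ?_, ?_⟩
    · intro a ha b hb
      simp at hb; subst hb
      rw [hl] at ha; cases ha; exact hvx
    · rw [List.head?_append_of_ne_nil _ hqne]; exact hh
    · simp
  -- cost x ≤ cost v + w v x for any predecessor v
  have hle : ∀ v : V, E v x → cost E w v0 x ≤ cost E w v0 v + w v x := by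
    intro v hvx
    simp only [cost]
    rw [ENNReal.iInf_add]
    refine le_iInf fun q => ?_
    have hpath := extend v hvx q.1 q.2
    have : cost E w v0 x ≤ pathCost w (q.1 ++ [x]) :=
      iInf_le (fun p : {p : List V // IsPath E v0 x p} => pathCost w p.1) ⟨_, hpath⟩
    refine this.trans ?_
    obtain ⟨hc, hh, hl⟩ := q.2
    have hqne : q.1 ≠ [] := by rintro h; rw [h] at hh; simp at hh
    rw [pathCost_append_single w q.1 hqne x]
    have : q.1.getLast hqne = v := by
      rw [List.getLast?_eq_getLast hqne] at hl; exact Option.some_injective _ hl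
    rw [this]
  -- predecessors exist
  obtain ⟨p0, hp0⟩ := hreach
  obtain ⟨q0, hq0ne, _, hq0path, hq0edge⟩ := decomp p0 hp0
  -- minimizing predecessor
  set S : Finset V := Finset.univ.filter (fun v => E v x) with hS
  have hSne : S.Nonempty := ⟨q0.getLast hq0ne, by simp [hS, hq0edge]⟩
  obtain ⟨v, hvS, hvmin⟩ := S.exists_min_image (fun v => cost E w v0 v + w v x) hSne
  have hvx : E v x := by simpa [hS] using hvS
  -- cost v + w v x ≤ cost x
  have hge : cost E w v0 v + w v x ≤ cost E w v0 x := by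
    refine le_iInf fun p => ?_
    obtain ⟨q, hqne, hpq, hqpath, hqedge⟩ := decomp p.1 p.2
    have h1 : cost E w v0 v + w v x ≤ cost E w v0 (q.getLast hqne) + w (q.getLast hqne) x :=
      hvmin _ (by simp [hS, hqedge])
    have h2 : cost E w v0 (q.getLast hqne) ≤ pathCost w q :=
      iInf_le (fun p : {p : List V // IsPath E v0 (q.getLast hqne) p} => pathCost w p.1) ⟨q, hqpath⟩
    calc cost E w v0 v + w v x ≤ pathCost w q + w (q.getLast hqne) x :=
          h1.trans (add_le_add_left h2 _)
      _ = pathCost w p.1 := by rw [hpq, pathCost_append_single w q hqne x]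
  have heq : cost E w v0 v + w v x = cost E w v0 x := le_antisymm hge (hle v hvx)
  have hxfin : cost E w v0 x < ⊤ :=
    lt_of_le_of_lt (iInf_le _ ⟨p0, hp0⟩) (pathCost_lt_top w hfin hp0.1)
  have hvfin : cost E w v0 v < ⊤ := by
    rw [← heq] at hxfin
    exact lt_of_le_of_lt le_self_add hxfin
  refine ⟨v, hvx, heq, ?_⟩
  rw [← heq]
  exact ENNReal.lt_add_right hvfin.ne (hpos v x hvx).ne'
end
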